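/- As n → ∞, log σ_n is asymptotically equivalent to n·log n, i.e., (log σ_n)/(n log n) → 1. -/

import Mathlib

open Nat Filter

/-- `σ n := ∏_{p prime} p ^ ⌊n / (p - 1)⌋` (only finitely many primes, those with
`p ≤ n + 1`, have a nonzero exponent; `n / (p - 1)` is natural division). -/
noncomputable def sigma' (n : ℕ) : ℕ := ∏ᶠ p ∈ {p : ℕ | p.Prime}, p ^ (n / (p - 1))

namespace LogSigmaAux

open Finset

lemma sigma'_eq (n : ℕ) : sigma' n = ∏ p ∈ primesBelow (n + 2), p ^ (n / (p - 1)) := by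
  apply finprod_mem_eq_prod_of_inter_mulSupport_eq
  ext p
  simp only [Set.mem_inter_iff, Set.mem_setOf_eq, Function.mem_mulSupport, Finset.mem_coe,
    Nat.mem_primesBelow]
  constructor
  · rintro ⟨hp, hne⟩
    refine ⟨⟨?_, hp⟩, hne⟩
    by_contra h
    push_neg at h
    have : n / (p - 1) = 0 := Nat.div_eq_of_lt (by omega)
    simp [this] at hne
  · rintro ⟨⟨_, hp⟩, hne⟩
    exact ⟨hp, hne⟩

lemma nu_le_div_pred {p n : ℕ} (hp : p.Prime) : (n !).factorization p ≤ n / (p - 1) := by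
  have h := Nat.Prime.emultiplicity_factorial_le_div_pred hp n
  have hf : FiniteMultiplicity p (n !) :=
    Nat.finiteMultiplicity_iff.mpr ⟨hp.ne_one, Nat.factorial_pos n⟩
  rw [hf.emultiplicity_eq_multiplicity] at h
  rw [← Nat.multiplicity_eq_factorization hp (Nat.factorial_ne_zero n)]
  exact_mod_cast h

lemma div_pred_le_nu {p n : ℕ} (hp : p.Prime) (hn : n ≠ 0) :
    n / (p - 1) ≤ (n !).factorization p + Nat.log p n + 1 := by
  have hm := Nat.Prime.sub_one_mul_multiplicity_factorial (n := n) hp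
  have hs : (p.digits n).sum ≤ n := Nat.digit_sum_le p n
  have hn' : n = (p - 1) * multiplicity p (n !) + (p.digits n).sum := by omega
  have hdig : (p.digits n).sum ≤ (p - 1) * (Nat.log p n + 1) := by
    calc (p.digits n).sum ≤ (p.digits n).length • (p - 1) :=
          List.sum_le_card_nsmul _ _ (fun x hx => by
            have := Nat.digits_lt_base hp.one_lt hx; omega)
      _ = (p - 1) * (Nat.log p n + 1) := by
          rw [Nat.digits_len p n hp.one_lt hn, smul_eq_mul]; ring
  have hle : n ≤ (p - 1) * (multiplicity p (n !) + Nat.log p n + 1) := by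
    calc n = (p - 1) * multiplicity p (n !) + (p.digits n).sum := hn'
      _ ≤ (p - 1) * multiplicity p (n !) + (p - 1) * (Nat.log p n + 1) :=
          Nat.add_le_add_left hdig _
      _ = (p - 1) * (multiplicity p (n !) + Nat.log p n + 1) := by ring
  have h2 : n / (p - 1) ≤ multiplicity p (n !) + Nat.log p n + 1 := by
    calc n / (p - 1) ≤ (p - 1) * (multiplicity p (n !) + Nat.log p n + 1) / (p - 1) :=
          Nat.div_le_div_right hle
      _ = _ := Nat.mul_div_cancel_left _ (by have := hp.two_le; omega)
  rwa [Nat.multiplicity_eq_factorization hp (Nat.factorial_ne_zero n)] at h2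

lemma factorial_eq_prod (n : ℕ) :
    (n ! : ℕ) = ∏ p ∈ primesBelow (n + 2), p ^ ((n !).factorization p) := by
  nth_rewrite 1 [← Nat.factorization_prod_pow_eq_self (Nat.factorial_ne_zero n)]
  rw [Finsupp.prod]
  apply Finset.prod_subset
  · intro q hq
    rw [Nat.support_factorization, Nat.mem_primeFactors] at hq
    rw [Nat.mem_primesBelow]
    obtain ⟨hq1, hq2, _⟩ := hq
    have : q ≤ n := (Nat.Prime.dvd_factorial hq1).mp hq2
    exact ⟨by omega, hq1⟩
  · intro q _ hq
    rw [Finsupp.notMem_support_iff] at hq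
    simp [hq]

lemma prime_ne_zero_of_mem {n : ℕ} : ∀ p ∈ primesBelow n, p ≠ 0 := fun _ hp =>
  (Nat.prime_of_mem_primesBelow hp).ne_zero

lemma log_prod_pow (s : Finset ℕ) (e : ℕ → ℕ) (h : ∀ p ∈ s, p ≠ 0) :
    Real.log (∏ p ∈ s, p ^ e p : ℕ) = ∑ p ∈ s, (e p : ℝ) * Real.log p := by
  rw [Nat.cast_prod, Real.log_prod]
  · exact Finset.sum_congr rfl fun p _ => by rw [Nat.cast_pow, Real.log_pow]
  · intro p hp
    have := h p hp
    simp only [Nat.cast_pow]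
    positivity

lemma log_factorial_le_log_sigma (n : ℕ) :
    Real.log (n !) ≤ Real.log (sigma' n) := by
  rw [sigma'_eq, factorial_eq_prod n, log_prod_pow _ _ prime_ne_zero_of_mem,
    log_prod_pow _ _ prime_ne_zero_of_mem]
  refine Finset.sum_le_sum fun p hp => ?_
  have hp' := Nat.prime_of_mem_primesBelow hp
  have h1 : (0:ℝ) ≤ Real.log p := Real.log_natCast_nonneg p
  have h2 : ((n !).factorization p : ℝ) ≤ ((n / (p - 1) : ℕ) : ℝ) := by
    exact_mod_cast nu_le_div_pred hp'
  exact mul_le_mul_of_nonneg_right h2 h1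

lemma sum_log_primes_le (n : ℕ) :
    ∑ p ∈ primesBelow (n + 2), Real.log p ≤ ((n:ℝ) + 1) * Real.log 4 := by
  have h : ∑ p ∈ primesBelow (n + 2), Real.log p
      = Real.log (∏ p ∈ primesBelow (n + 2), p ^ 1 : ℕ) := by
    rw [log_prod_pow _ _ prime_ne_zero_of_mem]; simp
  rw [h]
  have hprim : (∏ p ∈ primesBelow (n + 2), p ^ 1) = primorial (n + 1) := by
    simp [primorial, Nat.primesBelow]
  rw [hprim]
  have h4 : (primorial (n + 1) : ℝ) ≤ ((4:ℕ) ^ (n + 1) : ℕ) := by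
    exact_mod_cast primorial_le_4_pow (n + 1)
  calc Real.log (primorial (n + 1)) ≤ Real.log ((4:ℕ) ^ (n + 1) : ℕ) := by
        apply Real.log_le_log _ h4
        exact_mod_cast primorial_pos (n + 1)
    _ = ((n:ℝ) + 1) * Real.log 4 := by
        push_cast
        rw [Real.log_pow]
        push_cast; ring

lemma sum_log_n_le (n : ℕ) (hn : n ≠ 0) :
    ∑ _p ∈ primesBelow (n + 2), Real.log n
      ≤ ((Nat.sqrt n : ℝ) + 1) * Real.log n + 2 * (((n:ℝ) + 1) * Real.log 4) := by
  classical
  have hp4 := sum_log_primes_le n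
  set P := primesBelow (n + 2)
  have hlogn : (0:ℝ) ≤ Real.log n := Real.log_natCast_nonneg n
  rw [← Finset.sum_filter_add_sum_filter_not P (fun p => p ≤ Nat.sqrt n)]
  have h1 : ∑ _p ∈ P.filter (fun p => p ≤ Nat.sqrt n), Real.log n
      ≤ ((Nat.sqrt n : ℝ) + 1) * Real.log n := by
    rw [Finset.sum_const, nsmul_eq_mul]
    apply mul_le_mul_of_nonneg_right _ hlogn
    have hsub : P.filter (fun p => p ≤ Nat.sqrt n) ⊆ Finset.range (Nat.sqrt n + 1) := by
      intro p hp
      rw [Finset.mem_filter] at hp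
      rw [Finset.mem_range]
      omega
    have := Finset.card_le_card hsub
    rw [Finset.card_range] at this
    exact_mod_cast this
  have h2 : ∑ _p ∈ P.filter (fun p => ¬ p ≤ Nat.sqrt n), Real.log n
      ≤ 2 * (((n:ℝ) + 1) * Real.log 4) := by
    have hstep : ∑ _p ∈ P.filter (fun p => ¬ p ≤ Nat.sqrt n), Real.log n
        ≤ ∑ p ∈ P.filter (fun p => ¬ p ≤ Nat.sqrt n), 2 * Real.log p := by
      refine Finset.sum_le_sum fun p hp => ?_
      rw [Finset.mem_filter] at hp
      obtain ⟨hpP, hps⟩ := hp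
      have hq : n < p ^ 2 := by
        have h' : Nat.sqrt n < p := by omega
        have := Nat.sqrt_lt'.mp h'
        nlinarith
      calc Real.log n ≤ Real.log ((p:ℝ) ^ 2) := by
            apply Real.log_le_log (by positivity)
            exact_mod_cast hq.le
        _ = 2 * Real.log p := by
            rw [show ((p:ℝ)^2) = (p:ℝ)^(2:ℕ) by norm_num, Real.log_pow]; norm_num
    refine hstep.trans ?_
    have hsub : ∑ p ∈ P.filter (fun p => ¬ p ≤ Nat.sqrt n), 2 * Real.log p
        ≤ ∑ p ∈ P, 2 * Real.log p := by
      apply Finset.sum_le_sum_of_subset_of_nonneg (Finset.filter_subset _ _)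
      intro p _ _
      have : (0:ℝ) ≤ Real.log p := Real.log_natCast_nonneg p
      linarith
    refine hsub.trans ?_
    rw [← Finset.mul_sum]
    linarith
  linarith

lemma log_sigma_le (n : ℕ) (hn : n ≠ 0) :
    Real.log (sigma' n)
      ≤ Real.log (n !) + (((Nat.sqrt n : ℝ) + 1) * Real.log n
          + 3 * (((n:ℝ) + 1) * Real.log 4)) := by
  rw [sigma'_eq, log_prod_pow _ _ prime_ne_zero_of_mem]
  have hfac' : Real.log (n !)
      = ∑ p ∈ primesBelow (n+2), (((n !).factorization p : ℕ) : ℝ) * Real.log p := by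
    rw [show ((n ! : ℕ) : ℝ)
        = ((∏ p ∈ primesBelow (n + 2), p ^ ((n !).factorization p) : ℕ) : ℝ) from by
      rw [← factorial_eq_prod]]
    exact log_prod_pow _ _ prime_ne_zero_of_mem
  have hterm : ∀ p ∈ primesBelow (n+2), ((n / (p-1) : ℕ) : ℝ) * Real.log p
      ≤ (((n !).factorization p : ℕ) : ℝ) * Real.log p + (Real.log n + Real.log p) := by
    intro p hp
    have hp' := Nat.prime_of_mem_primesBelow hp
    have hlp : (0:ℝ) ≤ Real.log p := Real.log_natCast_nonneg p
    have h1 : ((n / (p-1) : ℕ) : ℝ)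
        ≤ (((n !).factorization p : ℕ) : ℝ) + (Nat.log p n : ℝ) + 1 := by
      exact_mod_cast div_pred_le_nu hp' hn
    have h2 : (Nat.log p n : ℝ) * Real.log p ≤ Real.log n := by
      have hpow : ((p ^ (Nat.log p n) : ℕ) : ℝ) ≤ (n : ℝ) := by
        exact_mod_cast Nat.pow_log_le_self p hn
      calc (Nat.log p n : ℝ) * Real.log p = Real.log ((p:ℝ) ^ (Nat.log p n)) :=
            (Real.log_pow _ _).symm
        _ ≤ Real.log n := by
            apply Real.log_le_log (by have := hp'.pos; positivity)
            exact_mod_cast hpow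
    nlinarith [mul_le_mul_of_nonneg_right h1 hlp]
  calc ∑ p ∈ primesBelow (n+2), ((n / (p-1) : ℕ) : ℝ) * Real.log p
      ≤ ∑ p ∈ primesBelow (n+2), ((((n !).factorization p : ℕ) : ℝ) * Real.log p
          + (Real.log n + Real.log p)) := Finset.sum_le_sum hterm
    _ = Real.log (n !) + ((∑ _p ∈ primesBelow (n+2), Real.log n)
          + ∑ p ∈ primesBelow (n+2), Real.log p) := by
        rw [Finset.sum_add_distrib, Finset.sum_add_distrib, hfac']
    _ ≤ _ := by nlinarith [sum_log_n_le n hn, sum_log_primes_le n]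

lemma log_factorial_le (n : ℕ) : Real.log (n !) ≤ (n:ℝ) * Real.log n := by
  calc Real.log (n !) ≤ Real.log ((n ^ n : ℕ)) := by
        apply Real.log_le_log (by exact_mod_cast Nat.factorial_pos n)
        exact_mod_cast Nat.factorial_le_pow n
    _ = (n:ℝ) * Real.log n := by rw [Nat.cast_pow, Real.log_pow]

lemma pow_self_le_exp_mul_factorial (n : ℕ) : (n:ℝ) ^ n ≤ Real.exp n * n ! := by
  induction n with
  | zero => simp
  | succ n ih =>
    rcases Nat.eq_zero_or_pos n with h0 | h1
    · subst h0
      norm_num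
    · have hn : (0:ℝ) < n := by exact_mod_cast h1
      have h3 : (1 + 1/(n:ℝ)) ^ n ≤ Real.exp 1 := by
        have h4 : (1 + 1/(n:ℝ)) ≤ Real.exp (1/n) := by
          have := Real.add_one_le_exp (1/(n:ℝ)); linarith
        calc (1 + 1/(n:ℝ)) ^ n ≤ (Real.exp (1/n)) ^ n :=
              pow_le_pow_left₀ (by positivity) h4 n
          _ = Real.exp 1 := by
              rw [← Real.exp_nat_mul]
              congr 1
              field_simp
      have key : ((n:ℝ) + 1) ^ n ≤ Real.exp 1 * (n:ℝ) ^ n := by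
        have h2 : ((n:ℝ) + 1) = (1 + 1/(n:ℝ)) * n := by field_simp
        rw [h2, mul_pow]
        exact mul_le_mul_of_nonneg_right h3 (pow_nonneg hn.le n)
      have hfact : (0:ℝ) < (n ! : ℝ) := by exact_mod_cast Nat.factorial_pos n
      push_cast [Nat.factorial_succ]
      calc ((n:ℝ) + 1) ^ (n + 1) = ((n:ℝ) + 1) * ((n:ℝ) + 1) ^ n := by ring
        _ ≤ ((n:ℝ) + 1) * (Real.exp 1 * (n:ℝ) ^ n) := by
            apply mul_le_mul_of_nonneg_left key (by positivity)
        _ ≤ ((n:ℝ) + 1) * (Real.exp 1 * (Real.exp n * n !)) := by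
            apply mul_le_mul_of_nonneg_left _ (by positivity)
            exact mul_le_mul_of_nonneg_left ih (Real.exp_pos 1).le
        _ = Real.exp ((n:ℝ) + 1) * (((n:ℝ) + 1) * (n ! : ℝ)) := by
            rw [Real.exp_add]; ring

lemma le_log_factorial (n : ℕ) (hn : 1 ≤ n) :
    (n:ℝ) * Real.log n - n ≤ Real.log (n !) := by
  have hn' : (0:ℝ) < n := by exact_mod_cast hn
  have h := pow_self_le_exp_mul_factorial n
  have hfact : (0:ℝ) < (n ! : ℝ) := by exact_mod_cast Nat.factorial_pos n
  have hlog := Real.log_le_log (by positivity) h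
  rw [Real.log_mul (Real.exp_ne_zero n) hfact.ne', Real.log_exp, Real.log_pow] at hlog
  linarith

end LogSigmaAux

/-- **Corollary 3.** As `n → ∞`, `log σ n` is asymptotically equivalent to `n log n`,
i.e. `(log σ n) / (n log n) → 1`. -/
theorem log_sigma_asymp :
    Tendsto (fun n : ℕ => Real.log (sigma' n) / (n * Real.log n)) atTop (nhds 1) := by
  open LogSigmaAux in
  have hcast : Tendsto (fun n : ℕ => (n:ℝ)) atTop atTop := tendsto_natCast_atTop_atTop
  have hlogt : Tendsto (fun n : ℕ => Real.log n) atTop atTop :=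
    Real.tendsto_log_atTop.comp hcast
  have t1 : Tendsto (fun n : ℕ => 1 / Real.log n) atTop (nhds 0) := by
    simpa [one_div, Pi.inv_def] using hlogt.inv_tendsto_atTop
  -- lower bound sequence
  have tlow : Tendsto (fun n : ℕ => 1 - 1 / Real.log n) atTop (nhds 1) := by
    simpa using tendsto_const_nhds.sub t1
  -- sqrt term
  have hsqrtt : Tendsto (fun n : ℕ => Real.sqrt n) atTop atTop := by
    have hs : Tendsto Real.sqrt atTop atTop := by
      rw [show Real.sqrt = fun x : ℝ => x ^ (1/2 : ℝ) from funext fun x => Real.sqrt_eq_rpow x]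
      exact tendsto_rpow_atTop (by norm_num)
    exact hs.comp hcast
  have t2' : Tendsto (fun n : ℕ => 2 / Real.sqrt n) atTop (nhds 0) := by
    have := hsqrtt.inv_tendsto_atTop.const_mul (2:ℝ)
    simpa [div_eq_mul_inv] using this
  have t2 : Tendsto (fun n : ℕ => ((Nat.sqrt n : ℝ) + 1) / n) atTop (nhds 0) := by
    apply tendsto_of_tendsto_of_tendsto_of_le_of_le' tendsto_const_nhds t2'
    · filter_upwards with n
      positivity
    · filter_upwards [eventually_ge_atTop 1] with n hn
      have hn' : (1:ℝ) ≤ (n:ℝ) := by exact_mod_cast hn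
      have h1 : (Nat.sqrt n : ℝ) ≤ Real.sqrt n := Real.nat_sqrt_le_real_sqrt
      have h2 : (1:ℝ) ≤ Real.sqrt n := by
        rw [show (1:ℝ) = Real.sqrt 1 from Real.sqrt_one.symm]
        exact Real.sqrt_le_sqrt hn'
      have h3 : ((Nat.sqrt n : ℝ) + 1) / n ≤ (2 * Real.sqrt n) / n := by
        apply div_le_div_of_nonneg_right _ (by linarith)
        · linarith
      refine h3.trans ?_
      rw [mul_div_assoc, Real.sqrt_div_self']
      rw [one_div, div_eq_mul_inv]

  have t3 : Tendsto (fun n : ℕ => ((n:ℝ) + 1) / ((n:ℝ) * Real.log n)) atTop (nhds 0) := by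
    have h31 : Tendsto (fun n : ℕ => 1 / (n:ℝ)) atTop (nhds 0) :=
      tendsto_one_div_atTop_nhds_zero_nat
    have hmul : Tendsto (fun n : ℕ => (1 + 1/(n:ℝ)) * (1 / Real.log n)) atTop (nhds 0) := by
      have := ((tendsto_const_nhds (x := (1:ℝ))).add h31).mul t1
      simpa using this
    apply hmul.congr'
    filter_upwards [eventually_ge_atTop 2] with n hn
    have hn0 : (0:ℝ) < n := by exact_mod_cast (by omega : 0 < n)
    have hlogpos : 0 < Real.log n := Real.log_pos (by exact_mod_cast (by omega : 1 < n))
    field_simp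
  have thigh : Tendsto (fun n : ℕ => 1 + ((Nat.sqrt n : ℝ) + 1) / n
      + 3 * Real.log 4 * (((n:ℝ) + 1) / ((n:ℝ) * Real.log n))) atTop (nhds 1) := by
    have := ((tendsto_const_nhds (x := (1:ℝ))).add t2).add (t3.const_mul (3 * Real.log 4))
    simpa using this
  apply tendsto_of_tendsto_of_tendsto_of_le_of_le' tlow thigh
  · filter_upwards [eventually_ge_atTop 2] with n hn
    have hn0 : (0:ℝ) < n := by exact_mod_cast (by omega : 0 < n)
    have hlogpos : 0 < Real.log n := Real.log_pos (by exact_mod_cast (by omega : 1 < n))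
    have hd : (0:ℝ) < (n:ℝ) * Real.log n := by positivity
    have hL : (n:ℝ) * Real.log n - n ≤ Real.log (sigma' n) :=
      (LogSigmaAux.le_log_factorial n (by omega)).trans (LogSigmaAux.log_factorial_le_log_sigma n)
    have heq : ((n:ℝ) * Real.log n - n) / ((n:ℝ) * Real.log n) = 1 - 1 / Real.log n := by
      field_simp
    rw [← heq]
    gcongr
  · filter_upwards [eventually_ge_atTop 2] with n hn
    have hn0 : (0:ℝ) < n := by exact_mod_cast (by omega : 0 < n)
    have hlogpos : 0 < Real.log n := Real.log_pos (by exact_mod_cast (by omega : 1 < n))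
    have hd : (0:ℝ) < (n:ℝ) * Real.log n := by positivity
    have hU : Real.log (sigma' n) ≤ (n:ℝ) * Real.log n + (((Nat.sqrt n : ℝ) + 1) * Real.log n
        + 3 * (((n:ℝ) + 1) * Real.log 4)) := by
      have := LogSigmaAux.log_sigma_le n (by omega)
      have := LogSigmaAux.log_factorial_le n
      linarith
    have heq : ((n:ℝ) * Real.log n + (((Nat.sqrt n : ℝ) + 1) * Real.log n
        + 3 * (((n:ℝ) + 1) * Real.log 4))) / ((n:ℝ) * Real.log n)
        = 1 + ((Nat.sqrt n : ℝ) + 1) / n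
          + 3 * Real.log 4 * (((n:ℝ) + 1) / ((n:ℝ) * Real.log n)) := by
      field_simp
      ring
    rw [← heq]
    gcongr
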